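/- Define H : (0,∞) → ℝ by H(t) = (1/√(πt)) ∫_{-π/2}^{π/2} exp(-sin²φ / t) · cos(2φ) dφ. Then there exists a constant C > 0 such that for all t > 0, |H(t)| ≤ C · min(1, t^{-3/2}). -/

import Mathlib

open Real MeasureTheory

noncomputable def Hfun (t : ℝ) : ℝ :=
  (1 / Real.sqrt (Real.pi * t)) *
    ∫ φ in (-(Real.pi / 2))..(Real.pi / 2),
      Real.exp (-(Real.sin φ) ^ 2 / t) * Real.cos (2 * φ)

lemma intCos : ∫ φ in (-(Real.pi / 2))..(Real.pi / 2), Real.cos (2 * φ) = 0 := by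
  rw [intervalIntegral.integral_comp_mul_left Real.cos (by norm_num : (2:ℝ) ≠ 0),
    integral_cos]
  rw [show (2:ℝ) * (Real.pi / 2) = Real.pi by ring,
    show (2:ℝ) * -(Real.pi / 2) = -Real.pi by ring]
  simp [Real.sin_pi]

lemma intervalIntegrable_f (t : ℝ) :
    IntervalIntegrable (fun φ => Real.exp (-(Real.sin φ) ^ 2 / t) * Real.cos (2 * φ))
      volume (-(Real.pi / 2)) (Real.pi / 2) := by
  apply Continuous.intervalIntegrable
  fun_prop

lemma bound_large (t : ℝ) (ht : 0 < t) :
    |∫ φ in (-(Real.pi / 2))..(Real.pi / 2),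
      Real.exp (-(Real.sin φ) ^ 2 / t) * Real.cos (2 * φ)| ≤ Real.pi / t := by
  have hpi := Real.pi_pos
  have key : (∫ φ in (-(Real.pi / 2))..(Real.pi / 2),
      Real.exp (-(Real.sin φ) ^ 2 / t) * Real.cos (2 * φ))
      = ∫ φ in (-(Real.pi / 2))..(Real.pi / 2),
        (Real.exp (-(Real.sin φ) ^ 2 / t) - 1) * Real.cos (2 * φ) := by
    rw [show (fun φ => (Real.exp (-(Real.sin φ) ^ 2 / t) - 1) * Real.cos (2 * φ))
        = (fun φ => Real.exp (-(Real.sin φ) ^ 2 / t) * Real.cos (2 * φ) - Real.cos (2 * φ))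
        from funext fun φ => by ring]
    rw [intervalIntegral.integral_sub (intervalIntegrable_f t)
      (by apply Continuous.intervalIntegrable; fun_prop), intCos, sub_zero]
  rw [key]
  have h := intervalIntegral.norm_integral_le_of_norm_le_const
    (a := -(Real.pi / 2)) (b := Real.pi / 2) (C := 1 / t)
    (f := fun φ => (Real.exp (-(Real.sin φ) ^ 2 / t) - 1) * Real.cos (2 * φ)) ?_
  · calc _ ≤ (1 / t) * |Real.pi / 2 - -(Real.pi / 2)| := h
    _ = Real.pi / t := by
        rw [abs_of_nonneg (by linarith : (0:ℝ) ≤ Real.pi / 2 - -(Real.pi / 2))]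
        field_simp
        norm_num
  · intro x _
    rw [Real.norm_eq_abs, abs_mul]
    have hexp1 : Real.exp (-(Real.sin x) ^ 2 / t) ≤ 1 := by
      rw [Real.exp_le_one_iff, neg_div]
      exact neg_nonpos.mpr (by positivity)
    have h1 : |Real.exp (-(Real.sin x) ^ 2 / t) - 1| ≤ 1 / t := by
      rw [abs_sub_comm, abs_of_nonneg (by linarith)]
      have hs : (Real.sin x) ^ 2 ≤ 1 := by
        nlinarith [Real.sin_sq_add_cos_sq x, sq_nonneg (Real.cos x)]
      have hle : 1 - Real.exp (-(Real.sin x) ^ 2 / t) ≤ (Real.sin x) ^ 2 / t := by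
        have := Real.add_one_le_exp (-((Real.sin x) ^ 2 / t))
        rw [neg_div]
        linarith
      calc 1 - Real.exp (-(Real.sin x) ^ 2 / t) ≤ (Real.sin x) ^ 2 / t := hle
        _ ≤ 1 / t := by gcongr
    calc |Real.exp (-(Real.sin x) ^ 2 / t) - 1| * |Real.cos (2 * x)|
        ≤ (1 / t) * 1 :=
          mul_le_mul h1 (Real.abs_cos_le_one _) (abs_nonneg _) (by positivity)
      _ = 1 / t := mul_one _

lemma bound_small (t : ℝ) (ht : 0 < t) :
    |∫ φ in (-(Real.pi / 2))..(Real.pi / 2),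
      Real.exp (-(Real.sin φ) ^ 2 / t) * Real.cos (2 * φ)|
      ≤ (Real.pi / 2) * Real.sqrt (Real.pi * t) := by
  have hpi := Real.pi_pos
  set c : ℝ := 4 / (Real.pi ^ 2 * t) with hc
  have hcpos : 0 < c := by positivity
  have hab : -(Real.pi / 2) ≤ Real.pi / 2 := by linarith
  have step1 : |∫ φ in (-(Real.pi / 2))..(Real.pi / 2),
      Real.exp (-(Real.sin φ) ^ 2 / t) * Real.cos (2 * φ)|
      ≤ ∫ φ in (-(Real.pi / 2))..(Real.pi / 2),
        |Real.exp (-(Real.sin φ) ^ 2 / t) * Real.cos (2 * φ)| := by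
    simpa only [Real.norm_eq_abs] using intervalIntegral.norm_integral_le_integral_norm
      (μ := volume) (f := fun φ => Real.exp (-(Real.sin φ) ^ 2 / t) * Real.cos (2 * φ)) hab
  have step2 : (∫ φ in (-(Real.pi / 2))..(Real.pi / 2),
        |Real.exp (-(Real.sin φ) ^ 2 / t) * Real.cos (2 * φ)|)
      ≤ ∫ φ in (-(Real.pi / 2))..(Real.pi / 2), Real.exp (-c * φ ^ 2) := by
    refine intervalIntegral.integral_mono_on hab ((intervalIntegrable_f t).norm) 
      ((integrable_exp_neg_mul_sq hcpos).intervalIntegrable) ?_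
    intro x hx
    have hsin : 2 / Real.pi * |x| ≤ |Real.sin x| := by
      rcases le_or_gt 0 x with hx0 | hx0
      · rw [abs_of_nonneg hx0, abs_of_nonneg (Real.sin_nonneg_of_nonneg_of_le_pi hx0
          (by linarith [hx.2]))]
        exact Real.mul_le_sin hx0 hx.2
      · have h1 : 2 / Real.pi * (-x) ≤ Real.sin (-x) :=
          Real.mul_le_sin (by linarith) (by linarith [hx.1])
        rw [Real.sin_neg] at h1
        rw [abs_of_neg hx0]
        exact h1.trans (neg_le_abs _)
    have hsq : c * x ^ 2 ≤ (Real.sin x) ^ 2 / t := by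
      have h2 : (2 / Real.pi * |x|) ^ 2 ≤ (Real.sin x) ^ 2 := by
        rw [← sq_abs (Real.sin x)]
        exact pow_le_pow_left₀ (by positivity) hsin 2
      have heq : c * x ^ 2 = (2 / Real.pi * |x|) ^ 2 / t := by
        rw [mul_pow, sq_abs, hc]; field_simp
        ring
      rw [heq]
      gcongr
    calc |Real.exp (-(Real.sin x) ^ 2 / t) * Real.cos (2 * x)|
        ≤ Real.exp (-(Real.sin x) ^ 2 / t) := by
          rw [abs_mul, abs_of_nonneg (Real.exp_nonneg _)]
          calc _ ≤ Real.exp (-(Real.sin x) ^ 2 / t) * 1 := by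
                gcongr
                exact Real.abs_cos_le_one _
            _ = _ := mul_one _
      _ ≤ Real.exp (-c * x ^ 2) := by
          apply Real.exp_le_exp.mpr
          rw [neg_div, neg_mul]
          exact neg_le_neg hsq
  have step3 : (∫ φ in (-(Real.pi / 2))..(Real.pi / 2), Real.exp (-c * φ ^ 2))
      ≤ ∫ φ : ℝ, Real.exp (-c * φ ^ 2) := by
    rw [intervalIntegral.integral_of_le hab]
    exact setIntegral_le_integral (integrable_exp_neg_mul_sq hcpos)
      (Filter.Eventually.of_forall fun x => Real.exp_nonneg _)
  have step4 : (∫ φ : ℝ, Real.exp (-c * φ ^ 2)) = (Real.pi / 2) * Real.sqrt (Real.pi * t) := by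
    rw [integral_gaussian]
    rw [show Real.pi / c = (Real.pi / 2) ^ 2 * (Real.pi * t) by
      rw [hc]; field_simp; ring]
    rw [Real.sqrt_mul (by positivity), Real.sqrt_sq (by positivity)]
  linarith

theorem stmt2 : ∃ C : ℝ, 0 < C ∧ ∀ t : ℝ, 0 < t →
    |Hfun t| ≤ C * min 1 (t ^ (-(3 : ℝ) / 2)) := by
  refine ⟨2, by norm_num, fun t ht => ?_⟩
  have hpi := Real.pi_pos
  have hs : 0 < Real.sqrt (Real.pi * t) := Real.sqrt_pos.mpr (by positivity)
  have hHabs : |Hfun t| = (1 / Real.sqrt (Real.pi * t)) *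
      |∫ φ in (-(Real.pi / 2))..(Real.pi / 2),
        Real.exp (-(Real.sin φ) ^ 2 / t) * Real.cos (2 * φ)| := by
    rw [Hfun, abs_mul, abs_of_nonneg (by positivity)]
  have hpi4 : Real.pi ≤ 4 := Real.pi_le_four
  rcases le_total t 1 with h1 | h1
  · have hmin : min 1 (t ^ (-(3:ℝ)/2)) = 1 := by
      apply min_eq_left
      apply Real.one_le_rpow_of_pos_of_le_one_of_nonpos ht h1
      norm_num
    rw [hmin, mul_one, hHabs]
    calc (1 / Real.sqrt (Real.pi * t)) *
        |∫ φ in (-(Real.pi / 2))..(Real.pi / 2),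
          Real.exp (-(Real.sin φ) ^ 2 / t) * Real.cos (2 * φ)|
        ≤ (1 / Real.sqrt (Real.pi * t)) * ((Real.pi / 2) * Real.sqrt (Real.pi * t)) := by
          gcongr
          exact bound_small t ht
      _ = Real.pi / 2 := by field_simp
      _ ≤ 2 := by linarith
  · have hmin : min 1 (t ^ (-(3:ℝ)/2)) = t ^ (-(3:ℝ)/2) := by
      apply min_eq_right
      apply Real.rpow_le_one_of_one_le_of_nonpos h1
      norm_num
    rw [hmin, hHabs]
    have hval : t ^ (-(3:ℝ)/2) = 1 / (t * Real.sqrt t) := by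
      rw [show (-(3:ℝ)/2) = -(1 + 1/2) by norm_num, Real.rpow_neg ht.le,
        Real.rpow_add ht, Real.rpow_one, ← Real.sqrt_eq_rpow, one_div]
    have hst : Real.sqrt (Real.pi * t) = Real.sqrt Real.pi * Real.sqrt t :=
      Real.sqrt_mul hpi.le t
    have hsppos : 0 < Real.sqrt Real.pi := Real.sqrt_pos.mpr hpi
    have hstpos : 0 < Real.sqrt t := Real.sqrt_pos.mpr ht
    have hpieq : Real.pi = Real.sqrt Real.pi * Real.sqrt Real.pi :=
      (Real.mul_self_sqrt hpi.le).symm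
    have hsp : Real.sqrt Real.pi ≤ 2 := by
      nlinarith
    calc (1 / Real.sqrt (Real.pi * t)) *
        |∫ φ in (-(Real.pi / 2))..(Real.pi / 2),
          Real.exp (-(Real.sin φ) ^ 2 / t) * Real.cos (2 * φ)|
        ≤ (1 / Real.sqrt (Real.pi * t)) * (Real.pi / t) := by
          gcongr
          exact bound_large t ht
      _ = Real.sqrt Real.pi * (1 / (t * Real.sqrt t)) := by
          rw [hst]
          field_simp
          linear_combination hpieq
      _ ≤ 2 * (1 / (t * Real.sqrt t)) := by gcongr
      _ = 2 * t ^ (-(3:ℝ)/2) := by rw [hval]
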